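/- Let f : ℝ × ℝ → ℝ be continuous with common periods (ω1, ω2) and (ω1', ω2'), and suppose ω1/ω1' is irrational. Then the closure of the curve {(f1(0,t), f2(0,t)) : t ∈ ℝ} contains the full image surface {(f1(u,v), f2(u,v)) : (u,v) ∈ ℝ²}, where f1, f2 are continuous functions each having (ω1, ω2) and (ω1', ω2') as common periods, provided f1, f2 are uniformly continuous. -/

import Mathlib

/-- Two-variable periodicity extends to integer multiples. -/
lemma per_int (f : ℝ × ℝ → ℝ) (a b : ℝ)
    (hper : ∀ u v : ℝ, f (u + a, v + b) = f (u, v)) :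
    ∀ (m : ℤ) (u v : ℝ), f (u + m * a, v + m * b) = f (u, v) := by
  intro m
  induction m using Int.induction_on with
  | zero => simp
  | succ n ih =>
    intro u v
    push_cast
    push_cast at ih
    have e1 : u + ((n : ℝ) + 1) * a = (u + (n : ℝ) * a) + a := by ring
    have e2 : v + ((n : ℝ) + 1) * b = (v + (n : ℝ) * b) + b := by ring
    rw [e1, e2, hper]
    exact ih u v
  | pred n ih =>
    intro u v
    push_cast
    push_cast at ih
    have h := hper (u + (-(n : ℝ) - 1) * a) (v + (-(n : ℝ) - 1) * b)
    have e1 : (u + (-(n : ℝ) - 1) * a) + a = u + -(n : ℝ) * a := by ring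
    have e2 : (v + (-(n : ℝ) - 1) * b) + b = v + -(n : ℝ) * b := by ring
    rw [e1, e2, ih] at h
    exact h.symm

/-- If `f1, f2 : ℝ² → ℝ` are uniformly continuous with common period pairs
`(ω1, ω2)` and `(ω1', ω2')` and `ω1/ω1'` is irrational, then the closure of the
curve `t ↦ (f1(0,t), f2(0,t))` contains the whole image surface
`{(f1(u,v), f2(u,v))}`. -/
theorem curve_closure_contains_surface (f1 f2 : ℝ × ℝ → ℝ)
    (hf1 : UniformContinuous f1) (hf2 : UniformContinuous f2)
    (ω1 ω2 ω1' ω2' : ℝ) (hω1 : ω1 ≠ 0) (hω1' : ω1' ≠ 0)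
    (hirr : Irrational (ω1 / ω1'))
    (hper1 : ∀ u v : ℝ, f1 (u + ω1, v + ω2) = f1 (u, v))
    (hper1' : ∀ u v : ℝ, f1 (u + ω1', v + ω2') = f1 (u, v))
    (hper2 : ∀ u v : ℝ, f2 (u + ω1, v + ω2) = f2 (u, v))
    (hper2' : ∀ u v : ℝ, f2 (u + ω1', v + ω2') = f2 (u, v)) :
    {p : ℝ × ℝ | ∃ u v : ℝ, p = (f1 (u, v), f2 (u, v))} ⊆
      closure {p : ℝ × ℝ | ∃ t : ℝ, p = (f1 (0, t), f2 (0, t))} := by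
  -- density of the subgroup generated by ω1, ω1'
  set S : AddSubgroup ℝ := AddSubgroup.closure {ω1, ω1'} with hS
  have hdense : Dense (S : Set ℝ) := by
    rcases S.dense_or_cyclic with h | ⟨a, ha⟩
    · exact h
    · exfalso
      have hmem1 : ω1 ∈ S := AddSubgroup.subset_closure (by simp)
      have hmem1' : ω1' ∈ S := AddSubgroup.subset_closure (by simp)
      rw [ha, AddSubgroup.mem_closure_singleton] at hmem1 hmem1'
      obtain ⟨m, hm⟩ := hmem1
      obtain ⟨n, hn⟩ := hmem1'
      simp only [zsmul_eq_mul] at hm hn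
      have ha0 : a ≠ 0 := by rintro rfl; simp at hm; exact hω1 hm.symm
      have hn0 : (n : ℝ) ≠ 0 := by
        intro h
        rw [h, zero_mul] at hn
        exact hω1' hn.symm
      have heq : ω1 / ω1' = (m : ℝ) / (n : ℝ) := by
        rw [← hm, ← hn]
        field_simp
      rw [heq] at hirr
      have hn0' : (n : ℚ) ≠ 0 := by exact_mod_cast hn0
      have hcast : ((((m : ℚ) / (n : ℚ)) : ℚ) : ℝ) = (m : ℝ) / (n : ℝ) := by
        push_cast; ring
      exact Rat.not_irrational _ (by rw [hcast]; exact hirr)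
  rintro p ⟨u, v, rfl⟩
  rw [Metric.mem_closure_iff]
  intro ε hε
  obtain ⟨δ1, hδ1, H1⟩ := Metric.uniformContinuous_iff.1 hf1 ε hε
  obtain ⟨δ2, hδ2, H2⟩ := Metric.uniformContinuous_iff.1 hf2 ε hε
  set δ := min δ1 δ2 with hδdef
  have hδ : 0 < δ := lt_min hδ1 hδ2
  have hmem : (-u) ∈ closure (S : Set ℝ) := hdense (-u)
  rw [Metric.mem_closure_iff] at hmem
  obtain ⟨s, hsS, hsd⟩ := hmem δ hδ
  obtain ⟨m, n, hmn⟩ := AddSubgroup.mem_closure_pair.mp hsS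
  simp only [zsmul_eq_mul] at hmn
  set t : ℝ := v + m * ω2 + n * ω2' with ht
  refine ⟨(f1 (0, t), f2 (0, t)), ⟨t, rfl⟩, ?_⟩
  have hinv1 : f1 (u + m * ω1 + n * ω1', t) = f1 (u, v) := by
    have h1 := per_int f1 ω1' ω2' hper1' n (u + m * ω1) (v + m * ω2)
    have h2 := per_int f1 ω1 ω2 hper1 m u v
    rw [ht, h1, h2]
  have hinv2 : f2 (u + m * ω1 + n * ω1', t) = f2 (u, v) := by
    have h1 := per_int f2 ω1' ω2' hper2' n (u + m * ω1) (v + m * ω2)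
    have h2 := per_int f2 ω1 ω2 hper2 m u v
    rw [ht, h1, h2]
  have hclose : dist ((u + m * ω1 + n * ω1', t) : ℝ × ℝ) ((0, t) : ℝ × ℝ) < δ := by
    rw [Prod.dist_eq]
    simp only [dist_self]
    have e : u + (m : ℝ) * ω1 + (n : ℝ) * ω1' = u + s := by rw [← hmn]; ring
    rw [e]
    have e2 : dist (u + s) (0 : ℝ) = dist (-u) s := by
      rw [Real.dist_eq, Real.dist_eq, abs_sub_comm]
      congr 1; ring
    exact max_lt (by rw [e2]; exact hsd) hδ
  have d1 : dist (f1 (u, v)) (f1 (0, t)) < ε := by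
    rw [← hinv1]
    exact H1 (lt_of_lt_of_le hclose (min_le_left _ _))
  have d2 : dist (f2 (u, v)) (f2 (0, t)) < ε := by
    rw [← hinv2]
    exact H2 (lt_of_lt_of_le hclose (min_le_right _ _))
  rw [Prod.dist_eq]
  exact max_lt d1 d2
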